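/- Let n_i, n_k ∈ ℝ³ be unit vectors, let θ, t ∈ ℝ, and let R⁰ ∈ SO(3). Then tr(n̂_i · exp(−tθ n̂_i) · R⁰ · exp(tθ n̂_k)) = tr(−(1/2) n̂_i R⁰ n̂_k² − (1/2) n̂_i² R⁰ n̂_k) + tr(−n̂_i² R⁰ − n̂_i² R⁰ n̂_k²) sin(θt) + tr(n̂_i R⁰ + n̂_i R⁰ n̂_k²) cos(θt) + tr((1/2) n̂_i R⁰ n̂_k + (1/2) n̂_i² R⁰ n̂_k²) sin(2θt) + tr(−(1/2) n̂_i R⁰ n̂_k² + (1/2) n̂_i² R⁰ n̂_k) cos(2θt). -/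

import Mathlib

open Matrix Real

noncomputable section

/-- `ℝ³` with the Euclidean norm. -/
abbrev E3 := EuclideanSpace ℝ (Fin 3)

/-- Hat map: the skew-symmetric matrix associated to a vector `x ∈ ℝ³`,
with rows `(0, −x₃, x₂)`, `(x₃, 0, −x₁)`, `(−x₂, x₁, 0)`. -/
def hat (x : E3) : Matrix (Fin 3) (Fin 3) ℝ :=
  !![0, -x 2, x 1; x 2, 0, -x 0; -x 1, x 0, 0]

/-- Standard basis vectors `e_α` of `ℝ³`. -/
def e (α : Fin 3) : E3 := EuclideanSpace.single α 1

lemma hat_smul (c : ℝ) (x : E3) : hat (c • x) = c • hat x := by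
  ext i j; fin_cases i <;> fin_cases j <;> simp [hat, Matrix.smul_apply]

lemma hat_cube (n : E3) (hn : ‖n‖ = 1) : hat n ^ 3 = -hat n := by
  have h : n 0 ^ 2 + n 1 ^ 2 + n 2 ^ 2 = 1 := by
    have h2 : Real.sqrt (∑ i : Fin 3, ‖n i‖ ^ 2) = 1 := by
      rw [← EuclideanSpace.norm_eq]; exact hn
    have := Real.sqrt_eq_one.mp h2
    simpa [Fin.sum_univ_three, sq_abs] using this
  rw [pow_succ, pow_two]
  unfold hat
  rw [Matrix.mul_fin_three, Matrix.mul_fin_three]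
  ext i j
  fin_cases i <;> fin_cases j <;> simp <;>
    first
      | linear_combination (n 0) * h | linear_combination (-(n 0)) * h
      | linear_combination (n 1) * h | linear_combination (-(n 1)) * h
      | linear_combination (n 2) * h | linear_combination (-(n 2)) * h
      | ring

lemma rodrigues (A : Matrix (Fin 3) (Fin 3) ℝ) (hA : A ^ 3 = -A) (s : ℝ) :
    NormedSpace.exp (s • A) = 1 + Real.sin s • A + (1 - Real.cos s) • A ^ 2 := by
  letI : SeminormedRing (Matrix (Fin 3) (Fin 3) ℝ) := Matrix.linftyOpSemiNormedRing
  letI : NormedRing (Matrix (Fin 3) (Fin 3) ℝ) := Matrix.linftyOpNormedRing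
  letI : NormedAlgebra ℝ (Matrix (Fin 3) (Fin 3) ℝ) := Matrix.linftyOpNormedAlgebra
  set g : ℝ → Matrix (Fin 3) (Fin 3) ℝ :=
    fun u => 1 + Real.sin u • A + (1 - Real.cos u) • A ^ 2 with hgdef
  have hg : ∀ u, HasDerivAt g (Real.cos u • A + Real.sin u • A ^ 2) u := by
    intro u
    have h1 : HasDerivAt (fun u : ℝ => Real.sin u • A) (Real.cos u • A) u :=
      (Real.hasDerivAt_sin u).smul_const A
    have h2 : HasDerivAt (fun u : ℝ => (1 - Real.cos u) • A ^ 2) (Real.sin u • A ^ 2) u := by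
      have := ((hasDerivAt_const u (1:ℝ)).sub (Real.hasDerivAt_cos u)).smul_const (A ^ 2)
      simp at this
      convert this using 1 <;> rfl
    convert ((hasDerivAt_const u (1 : Matrix (Fin 3) (Fin 3) ℝ)).add h1).add h2 using 1 <;> try rfl
    rw [zero_add]
  have key : ∀ u, A * g u = Real.cos u • A + Real.sin u • A ^ 2 := by
    intro u
    have h3 : A * A ^ 2 = -A := by rw [← pow_succ']; exact hA
    simp only [hgdef, mul_add, mul_one, mul_smul_comm, h3, ← pow_two]
    rw [smul_neg, sub_smul, one_smul]
    abel
  have hD : ∀ u : ℝ, HasDerivAt (fun v : ℝ => NormedSpace.exp ((-v) • A))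
      (NormedSpace.exp ((-u) • A) * (-A)) u := by
    intro u
    have := hasDerivAt_exp_smul_const (𝕂 := ℝ) (-A) u
    simp [smul_neg, neg_smul] at this
    convert this using 1 <;> try rfl
    all_goals simp only [neg_smul, mul_neg]
    all_goals rfl
  have hh : ∀ u : ℝ, HasDerivAt (fun v : ℝ => NormedSpace.exp ((-v) • A) * g v)
      (0 : Matrix (Fin 3) (Fin 3) ℝ) u := by
    intro u
    have := (hD u).mul (hg u)
    have hzero : NormedSpace.exp ((-u) • A) * (-A) * g u
        + NormedSpace.exp ((-u) • A) * (Real.cos u • A + Real.sin u • A ^ 2) = 0 := by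
      rw [mul_assoc, neg_mul, mul_neg, key u]
      abel
    rwa [hzero] at this
  have hconst : ∀ u : ℝ, NormedSpace.exp ((-u) • A) * g u
      = NormedSpace.exp ((-(0:ℝ)) • A) * g 0 := by
    intro u
    exact is_const_of_deriv_eq_zero (fun v => ((hh v).differentiableAt))
      (fun v => (hh v).deriv) u 0
  have h0 : NormedSpace.exp ((-(0:ℝ)) • A) * g 0 = 1 := by
    simp [hgdef, NormedSpace.exp_zero]
  have hcomm : Commute (s • A) ((-s) • A) := ((Commute.refl A).smul_left s).smul_right (-s)
  have hinv : NormedSpace.exp (s • A) * NormedSpace.exp ((-s) • A) = 1 := by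
    have := NormedSpace.exp_add_of_commute_of_mem_ball (𝕂 := ℝ) hcomm
      ((NormedSpace.expSeries_radius_eq_top ℝ (Matrix (Fin 3) (Fin 3) ℝ)).symm ▸ edist_lt_top _ _)
      ((NormedSpace.expSeries_radius_eq_top ℝ (Matrix (Fin 3) (Fin 3) ℝ)).symm ▸ edist_lt_top _ _)
    rw [← add_smul, add_neg_cancel, zero_smul, NormedSpace.exp_zero] at this
    exact this.symm
  calc NormedSpace.exp (s • A)
      = NormedSpace.exp (s • A) * (NormedSpace.exp ((-s) • A) * g s) := by
        rw [hconst s, h0, mul_one]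
    _ = (NormedSpace.exp (s • A) * NormedSpace.exp ((-s) • A)) * g s := by
        rw [mul_assoc]
    _ = g s := by rw [hinv, one_mul]

attribute [local instance] Matrix.normedAddCommGroup Matrix.normedSpace

/-- `SO(3)`: real 3×3 matrices with `RᵀR = I` and `det R = 1`. -/
def SO3 : Set (Matrix (Fin 3) (Fin 3) ℝ) := {R | Rᵀ * R = 1 ∧ R.det = 1}

/-- expansion of `tr(n̂ᵢ exp(−tθ n̂ᵢ) R⁰ exp(tθ n̂ₖ))` as a trigonometric
polynomial in `θt`. -/
theorem stmt13 (ni nk : E3) (hni : ‖ni‖ = 1) (hnk : ‖nk‖ = 1) (θ t : ℝ)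
    (R0 : Matrix (Fin 3) (Fin 3) ℝ) (hR0 : R0 ∈ SO3) :
    (hat ni * NormedSpace.exp (hat ((-(t * θ)) • ni)) * R0 *
        NormedSpace.exp (hat ((t * θ) • nk))).trace =
      ((-(1/2 : ℝ)) • (hat ni * R0 * hat nk ^ 2)
          + (-(1/2 : ℝ)) • (hat ni ^ 2 * R0 * hat nk)).trace
      + (-(hat ni ^ 2 * R0) - hat ni ^ 2 * R0 * hat nk ^ 2).trace * Real.sin (θ * t)
      + (hat ni * R0 + hat ni * R0 * hat nk ^ 2).trace * Real.cos (θ * t)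
      + ((1/2 : ℝ) • (hat ni * R0 * hat nk)
          + (1/2 : ℝ) • (hat ni ^ 2 * R0 * hat nk ^ 2)).trace * Real.sin (2 * θ * t)
      + ((-(1/2 : ℝ)) • (hat ni * R0 * hat nk ^ 2)
          + (1/2 : ℝ) • (hat ni ^ 2 * R0 * hat nk)).trace * Real.cos (2 * θ * t) := by
  have hA := hat_cube ni hni
  have hB := hat_cube nk hnk
  set A := hat ni with hAdef
  set B := hat nk with hBdef
  rw [hat_smul, hat_smul, rodrigues _ hA, rodrigues _ hB, Real.sin_neg, Real.cos_neg,
    mul_comm t θ, mul_assoc 2 θ t, Real.sin_two_mul, Real.cos_two_mul]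
  set s := Real.sin (θ * t) with hsdef
  set c := Real.cos (θ * t) with hcdef
  have hsc : s ^ 2 + c ^ 2 = 1 := Real.sin_sq_add_cos_sq (θ * t)
  have hL : A * (1 + -s • A + (1 - c) • A ^ 2) = c • A + (-s) • A ^ 2 := by
    have h3 : A * A ^ 2 = -A := by rw [← pow_succ']; exact hA
    simp only [mul_add, mul_one, mul_smul_comm, h3, ← pow_two]
    rw [smul_neg, sub_smul, one_smul, neg_smul]
    abel
  have key : A * (1 + -s • A + (1 - c) • A ^ 2) * R0 * (1 + s • B + (1 - c) • B ^ 2)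
      = ((-(1/2 : ℝ)) • (A * R0 * B ^ 2) + (-(1/2 : ℝ)) • (A ^ 2 * R0 * B))
        + s • (-(A ^ 2 * R0) - A ^ 2 * R0 * B ^ 2)
        + c • (A * R0 + A * R0 * B ^ 2)
        + (2 * s * c) • ((1/2 : ℝ) • (A * R0 * B) + (1/2 : ℝ) • (A ^ 2 * R0 * B ^ 2))
        + (2 * c ^ 2 - 1) • ((-(1/2 : ℝ)) • (A * R0 * B ^ 2) + (1/2 : ℝ) • (A ^ 2 * R0 * B)) := by
    rw [hL]
    simp only [Matrix.add_mul, Matrix.smul_mul, Matrix.mul_add, Matrix.mul_smul,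
      Matrix.neg_mul, Matrix.mul_neg, Matrix.sub_mul, Matrix.mul_sub, mul_one,
      smul_smul, smul_add, smul_sub, smul_neg, sub_smul, add_smul, neg_smul, one_smul,
      Matrix.mul_assoc]
    match_scalars <;> try ring
    all_goals linarith [hsc]
  rw [key]
  simp only [Matrix.trace_add, Matrix.trace_sub, Matrix.trace_neg, Matrix.trace_smul,
    smul_eq_mul]
  ring
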